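/- arXiv:quant-ph/0610061 — 8 statements merged into one kernel-verified Lean document; each statement's English description precedes it below -/
import Mathlib

section
/- Let k and H be N×N complex matrices whose double commutator reproduces H, i.e. [k, [k, H]] = H where [A, B] := A*B - B*A. Then for every real φ, exp(-(Complex.I * φ) • k) * H * exp((Complex.I * φ) • k) = (Real.cos φ : ℂ) • H - (Real.sin φ : ℂ) • (Complex.I • (k*H - H*k)). In particular, for φ = π one obtains exp(-(Complex.I * π) • k) * H * exp((Complex.I * π) • k) = -H, so the unitary K := exp(-(Complex.I * π) • k) inverts H. -/
open Matrix NormedSpace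

section normedWorld

attribute [local instance] Matrix.linftyOpNormedRing Matrix.linftyOpNormedAlgebra

lemma key' {N : ℕ} (k X : Matrix (Fin N) (Fin N) ℂ) (c : ℂ)
    (h : k * X = X * k + c • X) (t : ℂ) :
    exp (t • k) * X = Complex.exp (t * c) • (X * exp (t • k)) := by
  set B : Matrix (Fin N) (Fin N) ℂ := t • k + (t * c) • 1 with hB
  have hstep : (t • k) * X = X * B := by
    rw [hB, Matrix.smul_mul, h]
    simp [Matrix.mul_add, Matrix.mul_smul, smul_smul, mul_comm]
  have hpow : ∀ n : ℕ, (t • k) ^ n * X = X * B ^ n := by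
    intro n
    induction n with
    | zero => simp
    | succ n ih =>
      rw [pow_succ', mul_assoc, ih, ← mul_assoc, hstep, mul_assoc, ← pow_succ']
  have h1 : exp (t • k) * X = X * exp B := by
    simp only [exp_eq_tsum (𝕂 := ℂ)]
    erw [← (expSeries_summable' (𝕂 := ℂ) (t • k)).tsum_mul_right X,
        ← (expSeries_summable' (𝕂 := ℂ) B).tsum_mul_left X]
    congr 1
    ext n
    rw [smul_mul_assoc, mul_smul_comm, hpow]
  have hcomm : Commute (t • k) ((t * c) • (1 : Matrix (Fin N) (Fin N) ℂ)) :=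
    ((Commute.one_right (t • k)).smul_right (t * c))
  rw [h1, hB, Matrix.exp_add_of_commute _ _ hcomm]
  have h2 : (t * c) • (1 : Matrix (Fin N) (Fin N) ℂ) = algebraMap ℂ _ (t * c) := by
    simp [Algebra.algebraMap_eq_smul_one]
  erw [h2, ← algebraMap_exp_comm, ← Complex.exp_eq_exp_ℂ]
  simp [Algebra.algebraMap_eq_smul_one, mul_smul_comm, mul_comm]

end normedWorld

lemma key {N : ℕ} (k X : Matrix (Fin N) (Fin N) ℂ) (c : ℂ)
    (h : k * X = X * k + c • X) (t : ℂ) :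
    exp (t • k) * X = Complex.exp (t * c) • (X * exp (t • k)) :=
  key' k X c h t

theorem stmt2 (N : ℕ) (k H : Matrix (Fin N) (Fin N) ℂ)
    (hdc : k * (k * H - H * k) - (k * H - H * k) * k = H) :
    (∀ φ : ℝ,
      NormedSpace.exp (-(Complex.I * (φ : ℂ)) • k) * H *
          NormedSpace.exp ((Complex.I * (φ : ℂ)) • k) =
        ((Real.cos φ : ℂ) • H -
          (Real.sin φ : ℂ) • (Complex.I • (k * H - H * k)))) ∧
    NormedSpace.exp (-(Complex.I * (Real.pi : ℂ)) • k) * H *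
        NormedSpace.exp ((Complex.I * (Real.pi : ℂ)) • k) = -H := by
  set C : Matrix (Fin N) (Fin N) ℂ := k * H - H * k with hC
  have hkC : k * C - C * k = H := hdc
  have hplus : k * (H + C) = (H + C) * k + (1 : ℂ) • (H + C) := by
    rw [one_smul]
    have h1 : k * H - H * k = C := hC.symm
    linear_combination (norm := noncomm_ring) hkC + h1
  have hminus : k * (H - C) = (H - C) * k + (-1 : ℂ) • (H - C) := by
    rw [neg_smul, one_smul]
    have h1 : k * H - H * k = C := hC.symm
    linear_combination (norm := noncomm_ring) h1 - hkC
  have main : ∀ φ : ℝ,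
      NormedSpace.exp (-(Complex.I * (φ : ℂ)) • k) * H *
          NormedSpace.exp ((Complex.I * (φ : ℂ)) • k) =
        ((Real.cos φ : ℂ) • H -
          (Real.sin φ : ℂ) • (Complex.I • C)) := by
    intro φ
    set t : ℂ := -(Complex.I * (φ : ℂ)) with ht
    set E := NormedSpace.exp ((Complex.I * (φ : ℂ)) • k) with hE
    have e1 := key k (H + C) 1 hplus t
    have e2 := key k (H - C) (-1) hminus t
    have hEE : NormedSpace.exp (t • k) * E = 1 := by
      rw [hE, ← Matrix.exp_add_of_commute]
      · rw [ht, neg_smul, neg_add_cancel, NormedSpace.exp_zero]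
      · exact ((Commute.refl k).smul_left t).smul_right _
    have f1 : NormedSpace.exp (t • k) * (H + C) * E = Complex.exp t • (H + C) := by
      rw [e1, Matrix.smul_mul, mul_assoc, hEE, mul_one, mul_one]
    have f2 : NormedSpace.exp (t • k) * (H - C) * E = Complex.exp (-t) • (H - C) := by
      rw [e2, Matrix.smul_mul, mul_assoc, hEE, mul_one]
      norm_num
    have hH : H = (2⁻¹ : ℂ) • ((H + C) + (H - C)) := by module
    have hexp : Complex.exp t = Complex.cos (φ : ℂ) - Complex.sin (φ : ℂ) * Complex.I := by
      rw [ht, show -(Complex.I * (φ : ℂ)) = -(φ : ℂ) * Complex.I by ring,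
        Complex.exp_mul_I, Complex.cos_neg, Complex.sin_neg]
      ring
    have hexp' : Complex.exp (-t) = Complex.cos (φ : ℂ) + Complex.sin (φ : ℂ) * Complex.I := by
      rw [ht, neg_neg, show Complex.I * (φ : ℂ) = (φ : ℂ) * Complex.I by ring,
        Complex.exp_mul_I]
    conv_lhs => rw [hH]
    rw [Matrix.mul_smul, Matrix.smul_mul, Matrix.mul_add, Matrix.add_mul, f1, f2,
      hexp, hexp', Complex.ofReal_cos, Complex.ofReal_sin]
    match_scalars <;> ring
  refine ⟨main, ?_⟩
  have h := main Real.pi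
  rw [h]
  simp
end

section
/- Let H_XXX := σx ⊗ σx + σy ⊗ σy + σz ⊗ σz be the two-qubit isotropic Heisenberg interaction Hamiltonian, a 4×4 complex matrix. Then there is no invertible 4×4 complex matrix P with P * H_XXX * P⁻¹ = -H_XXX; in particular H_XXX is not sign-invertible by any unitary, let alone by local unitaries. (Its eigenvalues are 1, 1, 1, -3, which do not occur in pairs of opposite sign.) -/
open Matrix Kronecker

noncomputable def pauliX : Matrix (Fin 2) (Fin 2) ℂ := !![0, 1; 1, 0]
noncomputable def pauliY : Matrix (Fin 2) (Fin 2) ℂ := !![0, -Complex.I; Complex.I, 0]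
noncomputable def pauliZ : Matrix (Fin 2) (Fin 2) ℂ := !![1, 0; 0, -1]

noncomputable def H_XXX : Matrix (Fin 2 × Fin 2) (Fin 2 × Fin 2) ℂ :=
  pauliX ⊗ₖ pauliX + pauliY ⊗ₖ pauliY + pauliZ ⊗ₖ pauliZ

lemma trace_cube : Matrix.trace (H_XXX * H_XXX * H_XXX) = -24 := by
  simp [H_XXX, pauliX, pauliY, pauliZ, Matrix.trace, Matrix.mul_apply,
    Matrix.kroneckerMap_apply, Fintype.sum_prod_type, Fin.sum_univ_succ,
    Matrix.diag, Matrix.add_apply]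
  ring_nf

theorem stmt7 :
    ¬ ∃ P : Matrix (Fin 2 × Fin 2) (Fin 2 × Fin 2) ℂ,
      IsUnit P ∧ P * H_XXX * P⁻¹ = -H_XXX := by
  rintro ⟨P, hP, h⟩
  have hinv : P⁻¹ * P = 1 := Matrix.nonsing_inv_mul P (Matrix.isUnit_iff_isUnit_det P |>.mp hP)
  have h3 : P * (H_XXX * H_XXX * H_XXX) * P⁻¹ = -(H_XXX * H_XXX * H_XXX) := by
    have := congrArg (fun M => M * M * M) h
    calc P * (H_XXX * H_XXX * H_XXX) * P⁻¹
        = (P * H_XXX * P⁻¹) * (P * H_XXX * P⁻¹) * (P * H_XXX * P⁻¹) := by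
          have hc : ∀ M : Matrix (Fin 2 × Fin 2) (Fin 2 × Fin 2) ℂ, P⁻¹ * (P * M) = M := by
            intro M; rw [← Matrix.mul_assoc, hinv, Matrix.one_mul]
          simp only [Matrix.mul_assoc, hc]
      _ = (-H_XXX) * (-H_XXX) * (-H_XXX) := this
      _ = -(H_XXX * H_XXX * H_XXX) := by noncomm_ring
  have ht : Matrix.trace (P * (H_XXX * H_XXX * H_XXX) * P⁻¹)
      = Matrix.trace (H_XXX * H_XXX * H_XXX) := by
    rw [Matrix.trace_mul_cycle, ← Matrix.mul_assoc, hinv, Matrix.one_mul]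
  rw [h3, Matrix.trace_neg, trace_cube] at ht
  norm_num at ht
end

section
/- Let n ≥ 1, let G be a simple graph on Fin n, and let J : Fin n → Fin n → ℝ be symmetric with J k l ≠ 0 ↔ G.Adj k l. Define the Ising ZZ-Hamiltonian H_ZZ := Σ over pairs k < l of (J k l : ℂ) • (Z k * Z l), a Hermitian diagonal matrix on n qubits. Then there exists a local unitary K with K * H_ZZ * Kᴴ = -H_ZZ (i.e. the evolution exp(-itH_ZZ) is type-I invertible by local unitary operations) if and only if G is bipartite, i.e. G.Colorable 2. -/
open Matrix

/-- A `2^n`-dimensional matrix (indexed by configurations `Fin n → Fin 2`) is a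
local unitary if it is the `n`-fold Kronecker product of unitary 2×2 matrices. -/
def IsLocalUnitary {n : ℕ} (K : Matrix (Fin n → Fin 2) (Fin n → Fin 2) ℂ) : Prop :=
  ∃ u : Fin n → Matrix (Fin 2) (Fin 2) ℂ,
    (∀ ℓ, (u ℓ)ᴴ * u ℓ = 1) ∧ ∀ f g, K f g = ∏ ℓ, u ℓ (f ℓ) (g ℓ)

/-- The Pauli-z operator acting on qubit `ℓ`. -/
def Zop {n : ℕ} (ℓ : Fin n) : Matrix (Fin n → Fin 2) (Fin n → Fin 2) ℂ :=
  fun f g => if f = g then (-1 : ℂ) ^ ((f ℓ : ℕ)) else 0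

/-- The Pauli-x operator acting on qubit `ℓ`. -/
def Xop {n : ℕ} (ℓ : Fin n) : Matrix (Fin n → Fin 2) (Fin n → Fin 2) ℂ :=
  fun f g => if f ℓ ≠ g ℓ ∧ ∀ m, m ≠ ℓ → f m = g m then 1 else 0

/-- The Pauli-y operator acting on qubit `ℓ`. -/
def Yop {n : ℕ} (ℓ : Fin n) : Matrix (Fin n → Fin 2) (Fin n → Fin 2) ℂ :=
  fun f g => if f ℓ ≠ g ℓ ∧ ∀ m, m ≠ ℓ → f m = g m then
    Complex.I * (-1 : ℂ) ^ ((f ℓ : ℕ) + 1) else 0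

lemma ZZ_apply {n : ℕ} (k l : Fin n) (f g : Fin n → Fin 2) :
    (Zop k * Zop l) f g =
      if f = g then (-1:ℂ)^((f k:ℕ)) * (-1:ℂ)^((f l:ℕ)) else 0 := by
  classical
  simp [Matrix.mul_apply, Zop, ite_and, Finset.sum_ite_eq, mul_ite, ite_mul]
  split <;> simp_all

-- sign lemmas on Fin 2
lemma neg_one_pow_add_fin2 (a cv : Fin 2) :
    (-1:ℂ) ^ (((a + cv : Fin 2)):ℕ) = (-1:ℂ)^((a:ℕ)) * (-1:ℂ)^((cv:ℕ)) := by
  fin_cases a <;> fin_cases cv <;> norm_num [show ((2:Fin 2):ℕ) = 0 from rfl, show ((0:Fin 2):ℕ) = 0 from rfl, show ((1:Fin 2):ℕ) = 1 from rfl, show ((1 + 1 : Fin 2):ℕ) = 0 from rfl]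

lemma neg_one_pow_ne_fin2 {a b : Fin 2} (h : a ≠ b) :
    (-1:ℂ)^((a:ℕ)) * (-1:ℂ)^((b:ℕ)) = -1 := by
  fin_cases a <;> fin_cases b <;> simp_all

-- unitarity of the conditional flip
lemma flip_unitary (cv : Fin 2) :
    (Matrix.of fun a b : Fin 2 => if a = b + cv then (1:ℂ) else 0)ᴴ *
      (Matrix.of fun a b : Fin 2 => if a = b + cv then (1:ℂ) else 0) = 1 := by
  fin_cases cv <;> ext a b <;> fin_cases a <;> fin_cases b <;>
    simp [Matrix.mul_apply, Fin.sum_univ_two, Matrix.one_apply,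
      Matrix.conjTranspose_apply]
noncomputable def Efun {n : ℕ} (J : Fin n → Fin n → ℝ) (f : Fin n → Fin 2) : ℂ :=
  ∑ k : Fin n, ∑ l : Fin n,
    if k < l then (J k l : ℂ) * ((-1:ℂ)^((f k:ℕ)) * (-1:ℂ)^((f l:ℕ))) else 0

lemma Ham_apply {n : ℕ} (J : Fin n → Fin n → ℝ) (f g : Fin n → Fin 2) :
    (∑ k : Fin n, ∑ l : Fin n,
        if k < l then ((J k l : ℂ)) • (Zop k * Zop l) else 0) f g =
      if f = g then Efun J f else 0 := by
  classical
  rw [Matrix.sum_apply]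
  simp only [Matrix.sum_apply]
  rw [Efun]
  by_cases h : f = g
  · subst h
    simp only [if_pos rfl]
    refine Finset.sum_congr rfl fun k _ => Finset.sum_congr rfl fun l _ => ?_
    split
    · rw [Matrix.smul_apply, ZZ_apply]; simp
    · simp
  · simp only [if_neg h]
    refine Finset.sum_eq_zero fun k _ => Finset.sum_eq_zero fun l _ => ?_
    split
    · rw [Matrix.smul_apply, ZZ_apply]; simp [h]
    · simp

def tauc {n : ℕ} (c : Fin n → Fin 2) (f : Fin n → Fin 2) : Fin n → Fin 2 :=
  fun ℓ => f ℓ + c ℓ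

lemma tauc_tauc {n : ℕ} (c f : Fin n → Fin 2) : tauc c (tauc c f) = f := by
  funext ℓ
  have : ∀ x y : Fin 2, x + y + y = x := by decide
  simp [tauc, this]

lemma perm_conj {n : ℕ} (c : Fin n → Fin 2)
    (H : Matrix (Fin n → Fin 2) (Fin n → Fin 2) ℂ) (f g : Fin n → Fin 2) :
    ((Matrix.of fun f g => if f = tauc c g then (1:ℂ) else 0) * H *
      (Matrix.of fun f g => if f = tauc c g then (1:ℂ) else 0)ᴴ) f g
      = H (tauc c f) (tauc c g) := by
  classical
  have hcond : ∀ a b : Fin n → Fin 2, (a = tauc c b) ↔ (b = tauc c a) := by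
    intro a b
    constructor <;> (rintro rfl; rw [tauc_tauc])
  rw [Matrix.mul_apply]
  have h1 : ∀ q, ((Matrix.of fun f g => if f = tauc c g then (1:ℂ) else 0) * H) f q
      = H (tauc c f) q := by
    intro q
    rw [Matrix.mul_apply]
    simp only [Matrix.of_apply]
    calc ∑ p, (if f = tauc c p then (1:ℂ) else 0) * H p q
        = ∑ p, (if p = tauc c f then (1:ℂ) else 0) * H p q := by
          refine Finset.sum_congr rfl fun p _ => ?_
          rw [if_congr (hcond f p) rfl rfl]
      _ = H (tauc c f) q := by simp [ite_mul]
  simp only [h1, Matrix.conjTranspose_apply, Matrix.of_apply]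
  calc ∑ q, H (tauc c f) q * (starRingEnd ℂ) (if g = tauc c q then (1:ℂ) else 0)
      = ∑ q, H (tauc c f) q * (if q = tauc c g then (1:ℂ) else 0) := by
        refine Finset.sum_congr rfl fun q _ => ?_
        rw [if_congr (hcond g q) rfl rfl]
        split <;> simp
    _ = H (tauc c f) (tauc c g) := by simp [mul_ite]

lemma Efun_tauc {n : ℕ} (G : SimpleGraph (Fin n)) (J : Fin n → Fin n → ℝ)
    (hJsupp : ∀ k l, J k l ≠ 0 ↔ G.Adj k l) (c : Fin n → Fin 2)
    (hc : ∀ k l, G.Adj k l → c k ≠ c l) (f : Fin n → Fin 2) :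
    Efun J (tauc c f) = -Efun J f := by
  rw [Efun, Efun, ← Finset.sum_neg_distrib]
  refine Finset.sum_congr rfl fun k _ => ?_
  rw [← Finset.sum_neg_distrib]
  refine Finset.sum_congr rfl fun l _ => ?_
  by_cases hkl : k < l
  · simp only [if_pos hkl]
    by_cases hJ : J k l = 0
    · simp [hJ]
    · have hadj := (hJsupp k l).mp hJ
      have hne := hc k l hadj
      simp only [tauc, neg_one_pow_add_fin2]
      have h := neg_one_pow_ne_fin2 hne
      linear_combination ((J k l : ℂ) * ((-1:ℂ)^((f k:ℕ)) * (-1:ℂ)^((f l:ℕ)))) * h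
  · simp [hkl]

lemma backward {n : ℕ} (G : SimpleGraph (Fin n)) (J : Fin n → Fin n → ℝ)
    (hJsupp : ∀ k l, J k l ≠ 0 ↔ G.Adj k l) (hcol : G.Colorable 2) :
    ∃ K : Matrix (Fin n → Fin 2) (Fin n → Fin 2) ℂ, IsLocalUnitary K ∧
      K * (∑ k : Fin n, ∑ l : Fin n,
          if k < l then ((J k l : ℂ)) • (Zop k * Zop l) else 0) * Kᴴ =
        -(∑ k : Fin n, ∑ l : Fin n,
          if k < l then ((J k l : ℂ)) • (Zop k * Zop l) else 0) := by
  classical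
  obtain ⟨C⟩ := hcol
  set c : Fin n → Fin 2 := fun m => C m with hc
  refine ⟨Matrix.of fun f g => if f = tauc c g then (1:ℂ) else 0, ?_, ?_⟩
  · refine ⟨fun ℓ => Matrix.of fun a b : Fin 2 => if a = b + c ℓ then (1:ℂ) else 0,
      fun ℓ => flip_unitary (c ℓ), fun f g => ?_⟩
    simp only [Matrix.of_apply]
    rw [Finset.prod_boole]
    congr 1
    simp only [Finset.mem_univ, forall_true_left, eq_iff_iff]
    rw [funext_iff]
    rfl
  · ext f g
    rw [perm_conj, Matrix.neg_apply, Ham_apply, Ham_apply]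
    have hiff : (tauc c f = tauc c g) ↔ f = g := by
      constructor
      · intro h
        have := congrArg (tauc c) h
        rwa [tauc_tauc, tauc_tauc] at this
      · rintro rfl; rfl
    by_cases h : f = g
    · subst h
      rw [if_pos rfl, if_pos rfl, Efun_tauc G J hJsupp c (fun k l h => C.valid h) f]
    · rw [if_neg (fun hh => h (hiff.mp hh)), if_neg h, neg_zero]

lemma prod_two {n : ℕ} {M : Type*} [CommMonoid M] (k l : Fin n) (hkl : k ≠ l)
    (F : Fin n → M) (h : ∀ m, m ≠ k → m ≠ l → F m = 1) :
    ∏ m, F m = F k * F l := by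
  classical
  have hF : ∀ m, F m = (if m = k then F k else 1) * (if m = l then F l else 1) := by
    intro m
    by_cases h1 : m = k
    · subst h1; simp [hkl]
    · by_cases h2 : m = l
      · subst h2; simp [h1]
      · simp [h1, h2, h m h1 h2]
  calc ∏ m, F m = ∏ m, (if m = k then F k else 1) * (if m = l then F l else 1) :=
        Finset.prod_congr rfl fun m _ => hF m
    _ = (∏ m, if m = k then F k else 1) * (∏ m, if m = l then F l else 1) :=
        Finset.prod_mul_distrib
    _ = F k * F l := by rw [Finset.prod_ite_eq', Finset.prod_ite_eq']; simp

noncomputable def dd {n : ℕ} (u : Fin n → Matrix (Fin 2) (Fin 2) ℂ)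
    (m : Fin n) (a : Fin 2) : ℂ :=
  ∑ s : Fin 2, (u m a s * (starRingEnd ℂ) (u m a s)) * (-1:ℂ)^((s:ℕ))

lemma core {n : ℕ} (u : Fin n → Matrix (Fin 2) (Fin 2) ℂ)
    (huu : ∀ ℓ, u ℓ * (u ℓ)ᴴ = 1) (f : Fin n → Fin 2) (k l : Fin n) (hkl : k ≠ l) :
    ∑ q : Fin n → Fin 2, ((∏ ℓ, u ℓ (f ℓ) (q ℓ)) *
        (starRingEnd ℂ) (∏ ℓ, u ℓ (f ℓ) (q ℓ))) *
        ((-1:ℂ)^((q k:ℕ)) * (-1:ℂ)^((q l:ℕ)))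
      = dd u k (f k) * dd u l (f l) := by
  classical
  set W : (ℓ : Fin n) → Fin 2 → ℂ := fun ℓ s =>
    (u ℓ (f ℓ) s * (starRingEnd ℂ) (u ℓ (f ℓ) s)) *
      (if ℓ = k then (-1:ℂ)^((s:ℕ)) else if ℓ = l then (-1:ℂ)^((s:ℕ)) else 1)
    with hW
  have hterm : ∀ q : Fin n → Fin 2,
      ((∏ ℓ, u ℓ (f ℓ) (q ℓ)) * (starRingEnd ℂ) (∏ ℓ, u ℓ (f ℓ) (q ℓ))) *
        ((-1:ℂ)^((q k:ℕ)) * (-1:ℂ)^((q l:ℕ))) = ∏ ℓ, W ℓ (q ℓ) := by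
    intro q
    rw [map_prod]
    have hsgn : (-1:ℂ)^((q k:ℕ)) * (-1:ℂ)^((q l:ℕ))
        = ∏ m, (if m = k then (-1:ℂ)^((q m:ℕ)) else if m = l then (-1:ℂ)^((q m:ℕ)) else 1) := by
      rw [prod_two k l hkl _ (fun m h1 h2 => by simp [h1, h2])]
      simp [Ne.symm hkl]
    rw [hsgn, ← Finset.prod_mul_distrib, ← Finset.prod_mul_distrib]
  rw [Finset.sum_congr rfl fun q _ => hterm q]
  have hswap : ∑ q : Fin n → Fin 2, ∏ ℓ, W ℓ (q ℓ) = ∏ ℓ, ∑ s : Fin 2, W ℓ s := by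
    rw [Finset.prod_univ_sum]
    rw [Fintype.piFinset_univ]
  rw [hswap]
  rw [prod_two k l hkl _ ?_]
  · congr 1
    · simp [hW, dd]
    · simp [hW, dd, Ne.symm hkl]
  · intro m h1 h2
    have : ∑ s : Fin 2, W m s = (u m * (u m)ᴴ) (f m) (f m) := by
      rw [Matrix.mul_apply]
      refine Finset.sum_congr rfl fun s _ => ?_
      simp [hW, h1, h2, Matrix.conjTranspose_apply]
    rw [this, huu, Matrix.one_apply_eq]

lemma diag_comp {n : ℕ} (J : Fin n → Fin n → ℝ) (u : Fin n → Matrix (Fin 2) (Fin 2) ℂ)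
    (huu : ∀ ℓ, u ℓ * (u ℓ)ᴴ = 1) (K : Matrix (Fin n → Fin 2) (Fin n → Fin 2) ℂ)
    (hK : ∀ f g, K f g = ∏ ℓ, u ℓ (f ℓ) (g ℓ)) (f : Fin n → Fin 2) :
    (K * (∑ k : Fin n, ∑ l : Fin n,
        if k < l then ((J k l : ℂ)) • (Zop k * Zop l) else 0) * Kᴴ) f f =
      ∑ k : Fin n, ∑ l : Fin n,
        if k < l then (J k l : ℂ) * (dd u k (f k) * dd u l (f l)) else 0 := by
  classical
  rw [Matrix.mul_apply]
  have h1 : ∀ q, (K * (∑ k : Fin n, ∑ l : Fin n,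
      if k < l then ((J k l : ℂ)) • (Zop k * Zop l) else 0)) f q = K f q * Efun J q := by
    intro q
    rw [Matrix.mul_apply]
    calc ∑ p, K f p * (∑ k : Fin n, ∑ l : Fin n,
          if k < l then ((J k l : ℂ)) • (Zop k * Zop l) else 0) p q
        = ∑ p, K f p * (if p = q then Efun J p else 0) := by
          exact Finset.sum_congr rfl fun p _ => by rw [Ham_apply]
      _ = K f q * Efun J q := by simp
  calc ∑ q, (K * (∑ k : Fin n, ∑ l : Fin n,
        if k < l then ((J k l : ℂ)) • (Zop k * Zop l) else 0)) f q * Kᴴ q f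
      = ∑ q, (K f q * (starRingEnd ℂ) (K f q)) * Efun J q := by
        refine Finset.sum_congr rfl fun q _ => ?_
        rw [h1 q, Matrix.conjTranspose_apply]
        simp only [starRingEnd_apply]
        ring
    _ = ∑ q, ∑ k : Fin n, ∑ l : Fin n, (K f q * (starRingEnd ℂ) (K f q)) *
          (if k < l then (J k l : ℂ) * ((-1:ℂ)^((q k:ℕ)) * (-1:ℂ)^((q l:ℕ))) else 0) := by
        refine Finset.sum_congr rfl fun q _ => ?_
        rw [Efun, Finset.mul_sum]
        exact Finset.sum_congr rfl fun k _ => by rw [Finset.mul_sum]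
    _ = ∑ k : Fin n, ∑ l : Fin n, ∑ q, (K f q * (starRingEnd ℂ) (K f q)) *
          (if k < l then (J k l : ℂ) * ((-1:ℂ)^((q k:ℕ)) * (-1:ℂ)^((q l:ℕ))) else 0) := by
        rw [Finset.sum_comm]
        exact Finset.sum_congr rfl fun k _ => Finset.sum_comm
    _ = ∑ k : Fin n, ∑ l : Fin n,
          if k < l then (J k l : ℂ) * (dd u k (f k) * dd u l (f l)) else 0 := by
        refine Finset.sum_congr rfl fun k _ => Finset.sum_congr rfl fun l _ => ?_
        by_cases hkl : k < l
        · simp only [if_pos hkl]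
          calc ∑ q, (K f q * (starRingEnd ℂ) (K f q)) *
                ((J k l : ℂ) * ((-1:ℂ)^((q k:ℕ)) * (-1:ℂ)^((q l:ℕ))))
              = (J k l : ℂ) * ∑ q, (K f q * (starRingEnd ℂ) (K f q)) *
                ((-1:ℂ)^((q k:ℕ)) * (-1:ℂ)^((q l:ℕ))) := by
                rw [Finset.mul_sum]
                exact Finset.sum_congr rfl fun q _ => by ring
            _ = (J k l : ℂ) * (dd u k (f k) * dd u l (f l)) := by
                rw [← core u huu f k l hkl.ne]
                congr 1
                exact Finset.sum_congr rfl fun q _ => by rw [hK]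
        · simp [hkl]

noncomputable def Sfun {n : ℕ} (J : Fin n → Fin n → ℝ) (D : Fin n → Fin 2 → ℂ)
    (f : Fin n → Fin 2) : ℂ :=
  ∑ k' : Fin n, ∑ l' : Fin n,
    if k' < l' then (J k' l' : ℂ) * (D k' (f k') * D l' (f l')) else 0

def gg {n : ℕ} (k l : Fin n) (a b : Fin 2) : Fin n → Fin 2 :=
  fun m => if m = l then b else if m = k then a else 0

lemma comb {n : ℕ} (J : Fin n → Fin n → ℝ) (D : Fin n → Fin 2 → ℂ) (k l : Fin n)
    (hkl : k < l) :
    Sfun J D (gg k l 0 0) - Sfun J D (gg k l 0 1) - Sfun J D (gg k l 1 0)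
        + Sfun J D (gg k l 1 1)
      = (J k l : ℂ) * ((D k 0 - D k 1) * (D l 0 - D l 1)) := by
  classical
  have hne : k ≠ l := ne_of_lt hkl
  have hpt : ∀ k' l' : Fin n,
      ((if k' < l' then (J k' l' : ℂ) * (D k' (gg k l 0 0 k') * D l' (gg k l 0 0 l')) else 0)
        - (if k' < l' then (J k' l' : ℂ) * (D k' (gg k l 0 1 k') * D l' (gg k l 0 1 l')) else 0)
        - (if k' < l' then (J k' l' : ℂ) * (D k' (gg k l 1 0 k') * D l' (gg k l 1 0 l')) else 0)
        + (if k' < l' then (J k' l' : ℂ) * (D k' (gg k l 1 1 k') * D l' (gg k l 1 1 l')) else 0))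
      = if k' = k then (if l' = l then
          (J k l : ℂ) * ((D k 0 - D k 1) * (D l 0 - D l 1)) else 0) else 0 := by
    intro k' l'
    by_cases hord : k' < l'
    · by_cases e1 : k' = k
      · by_cases e2 : l' = l
        · simp [gg, hord, hne, e1, e2, hkl]
          ring_nf
        · have e3 : l' ≠ k := by
            intro h; rw [e1, h] at hord; exact lt_irrefl _ hord
          simp [gg, hord, hne, e1, e2, e3]
      · by_cases e2 : l' = l
        · have e3 : k' ≠ l := by
            intro h; rw [e2, h] at hord; exact lt_irrefl _ hord
          simp [gg, hord, e1, e2, e3]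
        · simp only [if_pos hord, if_neg e1, if_neg e2, gg]
          by_cases e3 : k' = l
          · have e4 : l' ≠ k := by
              intro h
              rw [e3] at hord; rw [h] at hord
              exact absurd (lt_trans hkl hord) (lt_irrefl k)
            simp [gg, hord, e1, e2, e3, e4]
          · by_cases e4 : l' = k <;> simp [gg, hord, e1, e2, e3, e4] <;> ring
    · simp only [if_neg hord]
      by_cases e1 : k' = k
      · by_cases e2 : l' = l
        · rw [e1, e2] at hord; exact absurd hkl hord
        · simp [e2]
      · simp [e1]
  simp only [Sfun]
  rw [← Finset.sum_sub_distrib, ← Finset.sum_sub_distrib, ← Finset.sum_add_distrib]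
  have h2 : ∀ k' ∈ (Finset.univ : Finset (Fin n)),
      ((∑ l' : Fin n, if k' < l' then (J k' l' : ℂ) * (D k' (gg k l 0 0 k') * D l' (gg k l 0 0 l')) else 0)
        - (∑ l' : Fin n, if k' < l' then (J k' l' : ℂ) * (D k' (gg k l 0 1 k') * D l' (gg k l 0 1 l')) else 0)
        - (∑ l' : Fin n, if k' < l' then (J k' l' : ℂ) * (D k' (gg k l 1 0 k') * D l' (gg k l 1 0 l')) else 0)
        + (∑ l' : Fin n, if k' < l' then (J k' l' : ℂ) * (D k' (gg k l 1 1 k') * D l' (gg k l 1 1 l')) else 0))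
      = ∑ l' : Fin n, (if k' = k then (if l' = l then
          (J k l : ℂ) * ((D k 0 - D k 1) * (D l 0 - D l 1)) else 0) else 0) := by
    intro k' _
    rw [← Finset.sum_sub_distrib, ← Finset.sum_sub_distrib, ← Finset.sum_add_distrib]
    exact Finset.sum_congr rfl fun l' _ => hpt k' l'
  rw [Finset.sum_congr rfl h2]
  simp [Finset.sum_ite_eq']

lemma dd_real {n : ℕ} (u : Fin n → Matrix (Fin 2) (Fin 2) ℂ) (m : Fin n) (a : Fin 2) :
    dd u m a = ((∑ s : Fin 2, Complex.normSq (u m a s) * (-1:ℝ)^((s:ℕ)) : ℝ) : ℂ) := by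
  rw [dd]
  push_cast
  exact Finset.sum_congr rfl fun s _ => by rw [Complex.mul_conj]

theorem stmt8 (n : ℕ) (hn : 1 ≤ n) (G : SimpleGraph (Fin n))
    (J : Fin n → Fin n → ℝ) (hJsymm : ∀ k l, J k l = J l k)
    (hJsupp : ∀ k l, J k l ≠ 0 ↔ G.Adj k l) :
    (∃ K : Matrix (Fin n → Fin 2) (Fin n → Fin 2) ℂ, IsLocalUnitary K ∧
        K * (∑ k : Fin n, ∑ l : Fin n,
            if k < l then ((J k l : ℂ)) • (Zop k * Zop l) else 0) * Kᴴ =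
          -(∑ k : Fin n, ∑ l : Fin n,
            if k < l then ((J k l : ℂ)) • (Zop k * Zop l) else 0)) ↔
      G.Colorable 2 := by
  classical
  constructor
  · rintro ⟨K, ⟨u, hu, hK⟩, hEq⟩
    have huu : ∀ ℓ, u ℓ * (u ℓ)ᴴ = 1 := fun ℓ => mul_eq_one_comm.mp (hu ℓ)
    set rd : Fin n → Fin 2 → ℝ :=
      fun m a => ∑ s : Fin 2, Complex.normSq (u m a s) * (-1:ℝ)^((s:ℕ)) with hrd
    have hall : ∀ f, Sfun J (dd u) f = -(Sfun J (fun _ a => (-1:ℂ)^((a:ℕ))) f) := by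
      intro f
      have h := congrFun (congrFun hEq f) f
      rw [diag_comp J u huu K hK f] at h
      rw [Matrix.neg_apply, Ham_apply, if_pos rfl] at h
      exact h
    have key : ∀ k l : Fin n, k < l → G.Adj k l →
        (rd k 0 - rd k 1) * (rd l 0 - rd l 1) = -4 := by
      intro k l hkl hadj
      have c1 := comb J (dd u) k l hkl
      have c2 := comb J (fun _ a => (-1:ℂ)^((a:ℕ))) k l hkl
      simp only [show ((0:Fin 2):ℕ) = 0 from rfl, show ((1:Fin 2):ℕ) = 1 from rfl,
        pow_zero, pow_one] at c2
      have hA : (J k l : ℂ) * ((dd u k 0 - dd u k 1) * (dd u l 0 - dd u l 1))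
          = -((J k l : ℂ) * 4) := by
        rw [← c1, hall, hall, hall, hall]
        linear_combination -c2
      have hJ : (J k l : ℂ) ≠ 0 := by
        rw [Complex.ofReal_ne_zero]
        exact (hJsupp k l).mpr hadj
      have hB : (dd u k 0 - dd u k 1) * (dd u l 0 - dd u l 1) = -4 := by
        have h4 : (J k l : ℂ) * ((dd u k 0 - dd u k 1) * (dd u l 0 - dd u l 1))
            = (J k l : ℂ) * (-4) := by linear_combination hA
        exact mul_left_cancel₀ hJ h4
      rw [dd_real, dd_real, dd_real, dd_real] at hB
      have hB' : (((rd k 0 - rd k 1) * (rd l 0 - rd l 1) : ℝ) : ℂ) = ((-4 : ℝ) : ℂ) := by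
        push_cast [hrd]
        push_cast at hB
        linear_combination hB
      exact_mod_cast hB'
    refine ⟨SimpleGraph.Coloring.mk (fun m => if 0 ≤ rd m 0 - rd m 1 then 0 else 1) ?_⟩
    intro k l hadj
    have hprod : (rd k 0 - rd k 1) * (rd l 0 - rd l 1) < 0 := by
      rcases lt_or_gt_of_ne hadj.ne with h | h
      · rw [key k l h hadj]; norm_num
      · have := key l k h hadj.symm
        rw [mul_comm] at this
        rw [this]; norm_num
    by_cases h0 : 0 ≤ rd k 0 - rd k 1 <;> by_cases h1 : 0 ≤ rd l 0 - rd l 1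
    · nlinarith
    · simp [h0, h1]
    · simp [h0, h1]
    · nlinarith
  · exact fun hcol => backward G J hJsupp hcol
end

section
/- Let n ≥ 1 and let J : Fin n → Fin n → ℝ be arbitrary coupling constants. Define the Heisenberg X(-X) (double-quantum) Hamiltonian H := Σ over pairs k < l of (J k l : ℂ) • (X k * X l - Y k * Y l). Then the joint local z-rotation by angle π/2, K := exp(-(Complex.I * (π/2)) • F_z), satisfies K * H * Kᴴ = -H. In particular the X(-X) interaction is type-I invertible by local unitaries on any coupling topology, bipartite or not. -/
open Matrix

lemma fin2_eq {a b c : Fin 2} (h1 : a ≠ c) (h2 : b ≠ c) : a = b := by omega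

lemma pauli_mul_apply {n : ℕ} (k l : Fin n) (hkl : k ≠ l) (a b : Fin 2 → ℂ)
    (f g : Fin n → Fin 2) :
    ((Matrix.of fun (f g : Fin n → Fin 2) => if f k ≠ g k ∧ ∀ m, m ≠ k → f m = g m then a (f k) else 0) *
     (Matrix.of fun (f g : Fin n → Fin 2) => if f l ≠ g l ∧ ∀ m, m ≠ l → f m = g m then b (f l) else 0)) f g =
    if f k ≠ g k ∧ f l ≠ g l ∧ ∀ m, m ≠ k → m ≠ l → f m = g m then a (f k) * b (f l) else 0 := by
  rw [Matrix.mul_apply]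
  by_cases hP : f k ≠ g k ∧ f l ≠ g l ∧ ∀ m, m ≠ k → m ≠ l → f m = g m
  · obtain ⟨h1, h2, h3⟩ := hP
    rw [if_pos ⟨h1, h2, h3⟩]
    rw [Finset.sum_eq_single_of_mem (Function.update f k (g k)) (Finset.mem_univ _)]
    · simp only [Matrix.of_apply]
      rw [if_pos, if_pos]
      · rw [Function.update_of_ne hkl.symm]
      · refine ⟨by rw [Function.update_of_ne hkl.symm]; exact h2, fun m hm => ?_⟩
        by_cases hmk : m = k
        · subst hmk; simp
        · rw [Function.update_of_ne hmk]; exact h3 m hmk hm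
      · exact ⟨by simpa using h1, fun m hm => by rw [Function.update_of_ne hm]⟩
    · intro h _ hne
      simp only [Matrix.of_apply]
      by_cases c1 : f k ≠ h k ∧ ∀ m, m ≠ k → f m = h m
      · by_cases c2 : h l ≠ g l ∧ ∀ m, m ≠ l → h m = g m
        · exfalso; apply hne; funext m
          by_cases hmk : m = k
          · subst hmk
            rw [Function.update_self]
            exact fin2_eq (Ne.symm c1.1) (Ne.symm h1)
          · rw [Function.update_of_ne hmk]
            exact (c1.2 m hmk).symm
        · rw [if_neg c2, mul_zero]
      · rw [if_neg c1, zero_mul]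
  · rw [if_neg hP]
    apply Finset.sum_eq_zero
    intro h _
    simp only [Matrix.of_apply]
    by_cases c1 : f k ≠ h k ∧ ∀ m, m ≠ k → f m = h m
    · by_cases c2 : h l ≠ g l ∧ ∀ m, m ≠ l → h m = g m
      · exfalso; apply hP
        refine ⟨?_, ?_, fun m hm1 hm2 => ?_⟩
        · rw [c2.2 k hkl] at c1; exact c1.1
        · rw [c1.2 l (Ne.symm hkl)]; exact c2.1
        · rw [c1.2 m hm1, c2.2 m hm2]
      · rw [if_neg c2, mul_zero]
    · rw [if_neg c1, zero_mul]

noncomputable def dvec {n : ℕ} : (Fin n → Fin 2) → ℂ :=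
  fun f => (1/2 : ℂ) * ∑ ℓ : Fin n, (-1 : ℂ) ^ ((f ℓ : ℕ))

lemma Fz_diag {n : ℕ} :
    ((1 / 2 : ℂ) • ∑ ℓ : Fin n, Zop ℓ) = Matrix.diagonal (dvec (n := n)) := by
  ext f g
  by_cases h : f = g
  · subst h
    simp [Zop, Matrix.sum_apply, Matrix.diagonal, dvec, Finset.mul_sum]
  · simp [Zop, Matrix.sum_apply, Matrix.diagonal, h]

lemma K_diag {n : ℕ} :
    NormedSpace.exp (-(Complex.I * ((Real.pi / 2 : ℝ) : ℂ)) •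
        ((1 / 2 : ℂ) • ∑ ℓ : Fin n, Zop ℓ)) =
    Matrix.diagonal (fun f => Complex.exp (-(Complex.I * ((Real.pi / 2 : ℝ) : ℂ)) * dvec f)) := by
  rw [Fz_diag, ← Matrix.diagonal_smul, Matrix.exp_diagonal]
  have h : NormedSpace.exp (-(Complex.I * ((Real.pi / 2 : ℝ) : ℂ)) • dvec (n := n)) =
      fun f => Complex.exp (-(Complex.I * ((Real.pi / 2 : ℝ) : ℂ)) * dvec f) := by
    funext f
    rw [Pi.coe_exp, ← Complex.exp_eq_exp_ℂ]
    simp [smul_eq_mul]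
  rw [h]

lemma star_dvec {n : ℕ} (f : Fin n → Fin 2) : star (dvec f) = dvec f := by
  have h : ∀ k : ℕ, star ((-1 : ℂ) ^ k) = (-1 : ℂ) ^ k := fun k => by
    rw [star_pow]; norm_num
  simp only [dvec, star_mul', star_sum, h]
  norm_num

lemma phase_eq {n : ℕ} (k l : Fin n) (hkl : k ≠ l) (f g : Fin n → Fin 2)
    (h1 : f k ≠ g k) (h2 : f l ≠ g l) (h3 : ∀ m, m ≠ k → m ≠ l → f m = g m)
    (h4 : f k = f l) :
    Complex.exp (-(Complex.I * ((Real.pi / 2 : ℝ) : ℂ)) * dvec f) *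
      star (Complex.exp (-(Complex.I * ((Real.pi / 2 : ℝ) : ℂ)) * dvec g)) = -1 := by
  rw [Complex.star_def, ← Complex.exp_conj, _root_.map_mul, map_neg, _root_.map_mul, Complex.conj_I,
    Complex.conj_ofReal, ← Complex.star_def, star_dvec, ← Complex.exp_add]
  have hd : dvec f - dvec g = 2 * (-1 : ℂ) ^ ((f k : ℕ)) := by
    have hsum : ∑ ℓ : Fin n, ((-1 : ℂ) ^ ((f ℓ : ℕ)) - (-1 : ℂ) ^ ((g ℓ : ℕ)))
        = ∑ ℓ ∈ ({k, l} : Finset (Fin n)), ((-1 : ℂ) ^ ((f ℓ : ℕ)) - (-1 : ℂ) ^ ((g ℓ : ℕ))) := by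
      refine (Finset.sum_subset (Finset.subset_univ _) ?_).symm
      intro m _ hm
      simp only [Finset.mem_insert, Finset.mem_singleton, not_or] at hm
      rw [h3 m hm.1 hm.2, sub_self]
    have key : ∀ a b : Fin 2, a ≠ b →
        (-1 : ℂ) ^ ((a : ℕ)) - (-1 : ℂ) ^ ((b : ℕ)) = 2 * (-1 : ℂ) ^ ((a : ℕ)) := by
      intro a b hab
      fin_cases a <;> fin_cases b <;> simp_all <;> norm_num
    have : dvec f - dvec g = (1/2 : ℂ) *
        ∑ ℓ : Fin n, ((-1 : ℂ) ^ ((f ℓ : ℕ)) - (-1 : ℂ) ^ ((g ℓ : ℕ))) := by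
      simp [dvec, Finset.sum_sub_distrib, mul_sub]
    rw [this, hsum, Finset.sum_pair hkl, key (f k) (g k) h1, key (f l) (g l) h2, ← h4]
    ring
  have harg : -(Complex.I * ((Real.pi / 2 : ℝ) : ℂ)) * dvec f +
      -(-Complex.I * ((Real.pi / 2 : ℝ) : ℂ)) * dvec g
      = -(Complex.I * ((Real.pi : ℝ) : ℂ)) * (-1 : ℂ) ^ ((f k : ℕ)) := by
    have : -(Complex.I * ((Real.pi / 2 : ℝ) : ℂ)) * dvec f +
        -(-Complex.I * ((Real.pi / 2 : ℝ) : ℂ)) * dvec g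
        = -(Complex.I * ((Real.pi / 2 : ℝ) : ℂ)) * (dvec f - dvec g) := by ring
    rw [this, hd]
    push_cast
    ring
  rw [harg]
  have hc : f k = 0 ∨ f k = 1 := by omega
  rcases hc with h | h <;> rw [h]
  · simp only [Fin.val_zero, pow_zero, mul_one]
    rw [show -(Complex.I * ((Real.pi : ℝ) : ℂ)) = -(((Real.pi : ℝ) : ℂ) * Complex.I) by ring,
      Complex.exp_neg, Complex.exp_pi_mul_I]
    norm_num
  · simp only [Fin.val_one, pow_one]
    rw [show -(Complex.I * ((Real.pi : ℝ) : ℂ)) * (-1 : ℂ) = ((Real.pi : ℝ) : ℂ) * Complex.I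
      by ring, Complex.exp_pi_mul_I]

lemma XX_sub_YY_apply {n : ℕ} (k l : Fin n) (hkl : k ≠ l) (f g : Fin n → Fin 2) :
    (Xop k * Xop l - Yop k * Yop l) f g =
    if f k ≠ g k ∧ f l ≠ g l ∧ ∀ m, m ≠ k → m ≠ l → f m = g m then
      1 + (-1 : ℂ) ^ ((f k : ℕ) + (f l : ℕ)) else 0 := by
  have eX : ∀ j : Fin n, Xop j = Matrix.of (fun f g : Fin n → Fin 2 =>
      if f j ≠ g j ∧ ∀ m, m ≠ j → f m = g m then (fun _ : Fin 2 => (1 : ℂ)) (f j) else 0) :=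
    fun j => rfl
  have eY : ∀ j : Fin n, Yop j = Matrix.of (fun f g : Fin n → Fin 2 =>
      if f j ≠ g j ∧ ∀ m, m ≠ j → f m = g m then
        (fun s : Fin 2 => Complex.I * (-1 : ℂ) ^ ((s : ℕ) + 1)) (f j) else 0) := fun j => rfl
  rw [Matrix.sub_apply, eX k, eX l, eY k, eY l,
    pauli_mul_apply k l hkl (fun _ : Fin 2 => (1 : ℂ)) (fun _ : Fin 2 => (1 : ℂ)) f g,
    pauli_mul_apply k l hkl (fun s : Fin 2 => Complex.I * (-1 : ℂ) ^ ((s : ℕ) + 1))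
      (fun s : Fin 2 => Complex.I * (-1 : ℂ) ^ ((s : ℕ) + 1)) f g]
  by_cases hP : f k ≠ g k ∧ f l ≠ g l ∧ ∀ m, m ≠ k → m ≠ l → f m = g m
  · rw [if_pos hP, if_pos hP, if_pos hP]
    show (1 : ℂ) * 1 - Complex.I * (-1 : ℂ) ^ ((f k : ℕ) + 1) *
      (Complex.I * (-1 : ℂ) ^ ((f l : ℕ) + 1)) = 1 + (-1 : ℂ) ^ ((f k : ℕ) + (f l : ℕ))
    rw [pow_succ, pow_succ, pow_add]
    rw [show ∀ z w : ℂ, (1 : ℂ) * 1 - Complex.I * (z * -1) * (Complex.I * (w * -1)) =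
      1 - Complex.I ^ 2 * (z * w) from fun z w => by ring, Complex.I_sq]
    ring
  · rw [if_neg hP, if_neg hP, if_neg hP, sub_zero]

lemma conj_term {n : ℕ} (k l : Fin n) (hkl : k ≠ l) (f g : Fin n → Fin 2) :
    Complex.exp (-(Complex.I * ((Real.pi / 2 : ℝ) : ℂ)) * dvec f) *
      ((Xop k * Xop l - Yop k * Yop l) f g) *
      star (Complex.exp (-(Complex.I * ((Real.pi / 2 : ℝ) : ℂ)) * dvec g)) =
    -((Xop k * Xop l - Yop k * Yop l) f g) := by
  rw [XX_sub_YY_apply k l hkl]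
  by_cases hP : f k ≠ g k ∧ f l ≠ g l ∧ ∀ m, m ≠ k → m ≠ l → f m = g m
  · rw [if_pos hP]
    by_cases h4 : f k = f l
    · have hph := phase_eq k l hkl f g hP.1 hP.2.1 hP.2.2 h4
      calc Complex.exp (-(Complex.I * ((Real.pi / 2 : ℝ) : ℂ)) * dvec f) *
            (1 + (-1 : ℂ) ^ ((f k : ℕ) + (f l : ℕ))) *
            star (Complex.exp (-(Complex.I * ((Real.pi / 2 : ℝ) : ℂ)) * dvec g))
          = (1 + (-1 : ℂ) ^ ((f k : ℕ) + (f l : ℕ))) *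
            (Complex.exp (-(Complex.I * ((Real.pi / 2 : ℝ) : ℂ)) * dvec f) *
              star (Complex.exp (-(Complex.I * ((Real.pi / 2 : ℝ) : ℂ)) * dvec g))) := by ring
        _ = -(1 + (-1 : ℂ) ^ ((f k : ℕ) + (f l : ℕ))) := by rw [hph]; ring
    · have hval : (1 : ℂ) + (-1 : ℂ) ^ ((f k : ℕ) + (f l : ℕ)) = 0 := by
        have : (f k : ℕ) + (f l : ℕ) = 1 := by omega
        rw [this]; norm_num
      rw [hval]
      ring
  · rw [if_neg hP]
    ring

theorem stmt10 (n : ℕ) (hn : 1 ≤ n) (J : Fin n → Fin n → ℝ) :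
    NormedSpace.exp (-(Complex.I * ((Real.pi / 2 : ℝ) : ℂ)) •
        ((1 / 2 : ℂ) • ∑ ℓ : Fin n, Zop ℓ)) *
      (∑ k : Fin n, ∑ l : Fin n,
        if k < l then ((J k l : ℂ)) • (Xop k * Xop l - Yop k * Yop l) else 0) *
      (NormedSpace.exp (-(Complex.I * ((Real.pi / 2 : ℝ) : ℂ)) •
        ((1 / 2 : ℂ) • ∑ ℓ : Fin n, Zop ℓ)))ᴴ =
    -(∑ k : Fin n, ∑ l : Fin n,
        if k < l then ((J k l : ℂ)) • (Xop k * Xop l - Yop k * Yop l) else 0) := by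
  rw [K_diag, Matrix.diagonal_conjTranspose]
  ext f g
  rw [Matrix.mul_diagonal, Matrix.diagonal_mul, Matrix.neg_apply, Pi.star_apply]
  simp only [Matrix.sum_apply]
  rw [Finset.mul_sum, Finset.sum_mul, ← Finset.sum_neg_distrib]
  refine Finset.sum_congr rfl fun k _ => ?_
  rw [Finset.mul_sum, Finset.sum_mul, ← Finset.sum_neg_distrib]
  refine Finset.sum_congr rfl fun l _ => ?_
  by_cases hkl : k < l
  · simp only [if_pos hkl, Matrix.smul_apply, smul_eq_mul]
    have h := conj_term k l (ne_of_lt hkl) f g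
    calc Complex.exp (-(Complex.I * ((Real.pi / 2 : ℝ) : ℂ)) * dvec f) *
          ((J k l : ℂ) * (Xop k * Xop l - Yop k * Yop l) f g) *
          star (Complex.exp (-(Complex.I * ((Real.pi / 2 : ℝ) : ℂ)) * dvec g))
        = (J k l : ℂ) * (Complex.exp (-(Complex.I * ((Real.pi / 2 : ℝ) : ℂ)) * dvec f) *
            ((Xop k * Xop l - Yop k * Yop l) f g) *
            star (Complex.exp (-(Complex.I * ((Real.pi / 2 : ℝ) : ℂ)) * dvec g))) := by ring
      _ = -((J k l : ℂ) * (Xop k * Xop l - Yop k * Yop l) f g) := by rw [h]; ring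
  · simp [if_neg hkl]
end

section
/- Let n ≥ 1, let f, g : Fin n → Fin 2 with f ≠ g, and let E := Matrix.stdBasisMatrix f g 1. Then there exists a real angle φ such that exp(-(Complex.I * φ) • F_z) * E * exp((Complex.I * φ) • F_z) = -E (i.e. E can be sign-inverted by a joint local z-rotation on all n qubits) if and only if the number of sites ℓ with f ℓ = 1 differs from the number of sites ℓ with g ℓ = 1. (Equivalently: the binary strings f and g must not contain the same number of 0's and 1's; otherwise E belongs to the zero root of F_z and is invariant under all joint z-rotations.) -/
open Matrix

lemma sum_zop {n : ℕ} :
    ∑ ℓ : Fin n, (Zop ℓ) = Matrix.diagonal (fun f : Fin n → Fin 2 => ∑ ℓ, (-1 : ℂ) ^ ((f ℓ : ℕ))) := by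
  ext i j
  by_cases h : i = j <;> simp [Zop, Matrix.sum_apply, Matrix.diagonal, h, Matrix.of_apply]

lemma count_sum {n : ℕ} (f : Fin n → Fin 2) :
    ∑ ℓ : Fin n, (-1 : ℂ) ^ ((f ℓ : ℕ)) =
      (n : ℂ) - 2 * ((Finset.univ.filter fun ℓ : Fin n => f ℓ = 1).card : ℂ) := by
  have h1 : ∀ ℓ, (-1 : ℂ) ^ ((f ℓ : ℕ)) = 1 - 2 * (if f ℓ = 1 then (1:ℂ) else 0) := by
    intro ℓ
    by_cases h : f ℓ = 1
    · simp [h]; ring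
    · have h0 : f ℓ = 0 := by omega
      simp [h0]
  simp_rw [h1, Finset.sum_sub_distrib, ← Finset.mul_sum, Finset.sum_boole, Finset.sum_const]
  simp [Finset.card_univ]


theorem stmt13 (n : ℕ) (hn : 1 ≤ n) (f g : Fin n → Fin 2) (hfg : f ≠ g) :
    (∃ φ : ℝ,
      NormedSpace.exp (-(Complex.I * (φ : ℂ)) • ((1 / 2 : ℂ) • ∑ ℓ : Fin n, Zop ℓ)) *
          Matrix.single f g (1 : ℂ) *
          NormedSpace.exp ((Complex.I * (φ : ℂ)) • ((1 / 2 : ℂ) • ∑ ℓ : Fin n, Zop ℓ)) =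
        -(Matrix.single f g (1 : ℂ))) ↔
      (Finset.univ.filter fun ℓ : Fin n => f ℓ = 1).card ≠
        (Finset.univ.filter fun ℓ : Fin n => g ℓ = 1).card := by
  set a := (Finset.univ.filter fun ℓ : Fin n => f ℓ = 1).card with ha
  set b := (Finset.univ.filter fun ℓ : Fin n => g ℓ = 1).card with hb
  -- rewrite the exp terms as diagonals
  have key : ∀ φ : ℝ, (NormedSpace.exp (-(Complex.I * (φ : ℂ)) • ((1 / 2 : ℂ) • ∑ ℓ : Fin n, Zop ℓ)) *
          Matrix.single f g (1 : ℂ) *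
          NormedSpace.exp ((Complex.I * (φ : ℂ)) • ((1 / 2 : ℂ) • ∑ ℓ : Fin n, Zop ℓ)) =
        -(Matrix.single f g (1 : ℂ))) ↔
        Complex.exp (Complex.I * φ * ((a : ℂ) - (b : ℂ))) = -1 := by
    intro φ
    have hd : ∀ c : ℂ, c • ((1 / 2 : ℂ) • ∑ ℓ : Fin n, Zop ℓ) =
        Matrix.diagonal (fun h : Fin n → Fin 2 => c * (1/2) * ∑ ℓ, (-1 : ℂ) ^ ((h ℓ : ℕ))) := by
      intro c
      rw [sum_zop, smul_smul, ← Matrix.diagonal_smul]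
      congr 1
    rw [hd, hd, Matrix.exp_diagonal, Matrix.exp_diagonal]
    constructor
    · intro h
      have h2 := congrFun (congrFun h f) g
      rw [Matrix.mul_diagonal, Matrix.diagonal_mul] at h2
      simp only [Matrix.single_apply_same, Matrix.neg_apply, mul_one,
        Pi.coe_exp, ← Complex.exp_eq_exp_ℂ, ← Complex.exp_add] at h2
      rw [count_sum, count_sum, ← ha, ← hb] at h2
      rw [show Complex.I * φ * ((a : ℂ) - (b : ℂ)) =
        -(Complex.I * ↑φ) * (1 / 2) * (↑n - 2 * ↑a) + Complex.I * ↑φ * (1 / 2) * (↑n - 2 * ↑b) by ring]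
      exact h2
    · intro h
      ext i j
      rw [Matrix.mul_diagonal, Matrix.diagonal_mul, Matrix.neg_apply]
      by_cases hij : i = f ∧ j = g
      · obtain ⟨rfl, rfl⟩ := hij
        simp only [Matrix.single_apply_same, mul_one,
          Pi.coe_exp, ← Complex.exp_eq_exp_ℂ, ← Complex.exp_add]
        rw [count_sum, count_sum, ← ha, ← hb]
        rw [show -(Complex.I * ↑φ) * (1 / 2) * (↑n - 2 * ↑a) + Complex.I * ↑φ * (1 / 2) * (↑n - 2 * ↑b)
          = Complex.I * φ * ((a : ℂ) - (b : ℂ)) by ring]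
        exact h
      · have : Matrix.single f g (1 : ℂ) i j = 0 := by
          rw [Matrix.single]
          simp only [Matrix.of_apply, ite_eq_right_iff]
          intro hh; exact absurd ⟨hh.1.symm, hh.2.symm⟩ hij
        rw [this]; ring
  simp_rw [key]
  constructor
  · rintro ⟨φ, hφ⟩ hab
    rw [hab] at hφ
    simp at hφ
    norm_num at hφ
  · intro hab
    have hd : ((a : ℝ) - b) ≠ 0 := by
      intro h; apply hab; exact_mod_cast sub_eq_zero.mp h
    refine ⟨Real.pi / ((a : ℝ) - b), ?_⟩
    have hdc : ((a : ℂ) - b) ≠ 0 := by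
      intro h; apply hab; exact_mod_cast sub_eq_zero.mp h
    have : Complex.I * ((Real.pi / ((a : ℝ) - b) : ℝ) : ℂ) * ((a : ℂ) - (b : ℂ)) =
        Real.pi * Complex.I := by
      push_cast
      rw [mul_assoc, div_mul_cancel₀ _ hdc, mul_comm]
    rw [this, Complex.exp_pi_mul_I]
end

section
/- Let n ≥ 1, let K be a local unitary on n qubits and H a 2^n-dimensional complex matrix with K * H * Kᴴ = -H. Then there exist a local unitary K̄ and a diagonal local unitary K_z (a local z-rotation, i.e. a local unitary that is also a diagonal matrix) such that K = K̄ * K_z * K̄ᴴ; consequently H̄ := K̄ᴴ * H * K̄ satisfies K_z * H̄ * K_zᴴ = -H̄. Thus every Hamiltonian that is type-I locally invertible lies on the local unitary orbit of a Hamiltonian that is sign-inverted by individual local z-rotations, so inversion by local z-rotations is the normal form of the problem. -/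
open Matrix

lemma unitary2_diag (u : Matrix (Fin 2) (Fin 2) ℂ) (hu : uᴴ * u = 1) :
    ∃ v d : Matrix (Fin 2) (Fin 2) ℂ, vᴴ * v = 1 ∧ dᴴ * d = 1 ∧
      (∃ dd : Fin 2 → ℂ, d = Matrix.diagonal dd) ∧ u = v * d * vᴴ := by
  have hu' : u * uᴴ = 1 := mul_eq_one_comm.mp hu
  have hadj : u.adjugate = u.det • uᴴ := by
    calc u.adjugate = u.adjugate * (u * uᴴ) := by rw [hu', mul_one]
    _ = (u.adjugate * u) * uᴴ := by rw [mul_assoc]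
    _ = u.det • uᴴ := by rw [Matrix.adjugate_mul, Matrix.smul_mul, Matrix.one_mul]
  have htr : u.adjugate = u.trace • (1 : Matrix (Fin 2) (Fin 2) ℂ) - u := by
    ext i j
    fin_cases i <;> fin_cases j <;>
      simp [Matrix.adjugate_fin_two, Matrix.trace_fin_two, Matrix.one_apply]
  have key : u.det • uᴴ = u.trace • (1 : Matrix (Fin 2) (Fin 2) ℂ) - u := by
    rw [← hadj, htr]
  have hdet : star u.det * u.det = 1 := by
    have := congrArg Matrix.det hu
    simpa [Matrix.det_conjTranspose] using this
  obtain ⟨s, hs⟩ : ∃ s : ℂ, s ^ 2 = u.det :=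
    IsAlgClosed.exists_pow_nat_eq u.det (n := 2) (by norm_num)
  have hss : star s * s = 1 := by
    have h2 : (star s * s) ^ 2 = 1 := by
      rw [mul_pow, ← star_pow, hs, hdet]
    have hr : star s * s = (Complex.normSq s : ℂ) := by
      rw [Complex.star_def, Complex.normSq_eq_conj_mul_self]
    rw [hr] at h2 ⊢
    have h3 : (Complex.normSq s) ^ 2 = 1 := by exact_mod_cast h2
    have hnn : 0 ≤ Complex.normSq s := Complex.normSq_nonneg s
    have : Complex.normSq s = 1 := by nlinarith
    rw [this]; norm_num
  have hs0 : s ≠ 0 := by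
    intro h; rw [h] at hss; simp at hss
  set h : Matrix (Fin 2) (Fin 2) ℂ := Complex.I • (star s • u - s • uᴴ) with hdef
  have hH : h.IsHermitian := by
    unfold Matrix.IsHermitian
    rw [hdef]
    simp only [Matrix.conjTranspose_smul, Matrix.conjTranspose_sub,
      Matrix.conjTranspose_conjTranspose, star_star, Complex.star_def, Complex.conj_I,
      Complex.conj_conj]
    module
  have hs2 : s • uᴴ = (star s * u.trace) • (1 : Matrix (Fin 2) (Fin 2) ℂ) - star s • u := by
    have h1 := congrArg (fun M => star s • M) key
    simp only [smul_smul, smul_sub] at h1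
    rw [← hs] at h1
    have hss' : star s * s ^ 2 = s := by
      rw [pow_two, ← mul_assoc, hss, one_mul]
    rw [hss'] at h1
    exact h1
  set c : ℂ := 2 * Complex.I * star s with hcdef
  set e : ℂ := Complex.I * (star s * u.trace) with hedef
  have hc0 : c ≠ 0 := by
    simp only [hcdef]
    intro hcc
    rcases mul_eq_zero.mp hcc with h' | h'
    · rcases mul_eq_zero.mp h' with h'' | h''
      · norm_num at h''
      · exact Complex.I_ne_zero h''
    · exact hs0 (by simpa using congrArg star h')
  have hh2 : h + e • (1 : Matrix (Fin 2) (Fin 2) ℂ) = c • u := by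
    rw [hdef, hs2]
    module
  have hu_expr : u = c⁻¹ • h + (c⁻¹ * e) • (1 : Matrix (Fin 2) (Fin 2) ℂ) := by
    have : c⁻¹ • (h + e • (1 : Matrix (Fin 2) (Fin 2) ℂ)) = u := by
      rw [hh2, smul_smul, inv_mul_cancel₀ hc0, one_smul]
    rw [← this]
    module
  set v : Matrix (Fin 2) (Fin 2) ℂ := (hH.eigenvectorUnitary : Matrix (Fin 2) (Fin 2) ℂ) with hvdef
  have hv1 : vᴴ * v = 1 := by
    rw [← Matrix.star_eq_conjTranspose]
    exact Matrix.mem_unitaryGroup_iff'.mp hH.eigenvectorUnitary.2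
  have hv2 : v * vᴴ = 1 := mul_eq_one_comm.mp hv1
  set D : Matrix (Fin 2) (Fin 2) ℂ := Matrix.diagonal (RCLike.ofReal ∘ hH.eigenvalues) with hDdef
  have hspec : h = v * D * vᴴ := by
    simpa [hvdef, hDdef, Matrix.star_eq_conjTranspose] using hH.spectral_theorem
  set d : Matrix (Fin 2) (Fin 2) ℂ := c⁻¹ • D + (c⁻¹ * e) • (1 : Matrix (Fin 2) (Fin 2) ℂ)
    with hddef
  have hud : u = v * d * vᴴ := by
    have : v * d * vᴴ = c⁻¹ • (v * D * vᴴ) + (c⁻¹ * e) • (v * vᴴ) := by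
      rw [hddef]
      simp only [Matrix.mul_add, Matrix.add_mul, Matrix.mul_smul, Matrix.smul_mul,
        Matrix.mul_one]
    rw [this, hv2, ← hspec, ← hu_expr]
  refine ⟨v, d, hv1, ?_, ?_, hud⟩
  · have hd_eq : d = vᴴ * u * v := by
      rw [hud, mul_assoc, mul_assoc, hv1, mul_one, ← mul_assoc, hv1, one_mul]
    rw [hd_eq]
    simp only [Matrix.conjTranspose_mul, Matrix.conjTranspose_conjTranspose]
    have cancel : ∀ X : Matrix (Fin 2) (Fin 2) ℂ, v * (vᴴ * X) = X := fun X => by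
      rw [← mul_assoc, hv2, one_mul]
    simp only [mul_assoc, cancel]
    rw [← mul_assoc uᴴ u, hu, one_mul, hv1]
  · refine ⟨fun i => c⁻¹ * (RCLike.ofReal (hH.eigenvalues i)) + c⁻¹ * e, ?_⟩
    ext i j
    rcases eq_or_ne i j with rfl | hij
    · simp [hddef, hDdef, Matrix.diagonal_apply_eq, Matrix.one_apply_eq]
    · simp [hddef, hDdef, Matrix.diagonal_apply_ne _ hij, Matrix.one_apply_ne hij]

def kron {n : ℕ} (u : Fin n → Matrix (Fin 2) (Fin 2) ℂ) :
    Matrix (Fin n → Fin 2) (Fin n → Fin 2) ℂ :=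
  Matrix.of fun f g => ∏ ℓ, u ℓ (f ℓ) (g ℓ)

lemma kron_mul {n : ℕ} (A B : Fin n → Matrix (Fin 2) (Fin 2) ℂ) :
    kron A * kron B = kron fun ℓ => A ℓ * B ℓ := by
  ext f g
  show ∑ h : Fin n → Fin 2, (∏ ℓ, A ℓ (f ℓ) (h ℓ)) * ∏ ℓ, B ℓ (h ℓ) (g ℓ)
      = ∏ ℓ, ∑ j, A ℓ (f ℓ) j * B ℓ j (g ℓ)
  rw [Finset.prod_univ_sum]
  rw [Fintype.piFinset_univ]
  exact Finset.sum_congr rfl fun h _ => (Finset.prod_mul_distrib).symm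

lemma kron_conjTranspose {n : ℕ} (A : Fin n → Matrix (Fin 2) (Fin 2) ℂ) :
    (kron A)ᴴ = kron fun ℓ => (A ℓ)ᴴ := by
  ext f g
  simp [kron, Matrix.conjTranspose_apply, star_prod]

lemma kron_one {n : ℕ} :
    kron (fun _ : Fin n => (1 : Matrix (Fin 2) (Fin 2) ℂ)) = 1 := by
  ext f g
  rcases eq_or_ne f g with rfl | hfg
  · simp [kron, Matrix.one_apply]
  · obtain ⟨ℓ, hℓ⟩ := Function.ne_iff.mp hfg
    rw [Matrix.one_apply_ne hfg]
    exact Finset.prod_eq_zero (Finset.mem_univ ℓ) (Matrix.one_apply_ne hℓ)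

theorem stmt16 (n : ℕ) (hn : 1 ≤ n)
    (K H : Matrix (Fin n → Fin 2) (Fin n → Fin 2) ℂ)
    (hK : IsLocalUnitary K) (hinv : K * H * Kᴴ = -H) :
    ∃ Kb Kz : Matrix (Fin n → Fin 2) (Fin n → Fin 2) ℂ,
      IsLocalUnitary Kb ∧ IsLocalUnitary Kz ∧
      (∃ d : (Fin n → Fin 2) → ℂ, Kz = Matrix.diagonal d) ∧
      K = Kb * Kz * Kbᴴ ∧
      Kz * (Kbᴴ * H * Kb) * Kzᴴ = -(Kbᴴ * H * Kb) := by
  obtain ⟨u, hu1, hu2⟩ := hK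
  have hKeq : K = kron u := by ext f g; exact hu2 f g
  choose v d hv hd hdiag hud using fun ℓ => unitary2_diag (u ℓ) (hu1 ℓ)
  choose dd hdddef using hdiag
  set Kb := kron v with hKbdef
  set Kz := kron d with hKzdef
  have hKb2 : K = Kb * Kz * Kbᴴ := by
    rw [hKeq, hKbdef, hKzdef, kron_conjTranspose, kron_mul, kron_mul]
    exact congrArg kron (funext fun ℓ => hud ℓ)
  have hb1 : Kbᴴ * Kb = 1 := by
    rw [hKbdef, kron_conjTranspose, kron_mul,
      show (fun ℓ => (v ℓ)ᴴ * v ℓ) = fun _ : Fin n => (1 : Matrix (Fin 2) (Fin 2) ℂ) from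
        funext hv]
    exact kron_one
  have hb2 : Kb * Kbᴴ = 1 := mul_eq_one_comm.mp hb1
  have cb : ∀ X : Matrix (Fin n → Fin 2) (Fin n → Fin 2) ℂ, Kb * (Kbᴴ * X) = X := fun X => by
    rw [← mul_assoc, hb2, one_mul]
  have cb' : ∀ X : Matrix (Fin n → Fin 2) (Fin n → Fin 2) ℂ, Kbᴴ * (Kb * X) = X := fun X => by
    rw [← mul_assoc, hb1, one_mul]
  have hz : Kz = Kbᴴ * (K * Kb) := by
    rw [hKb2]
    simp only [mul_assoc, cb', hb1, mul_one]
  refine ⟨Kb, Kz, ⟨v, hv, fun f g => rfl⟩, ⟨d, hd, fun f g => rfl⟩, ?_, hKb2, ?_⟩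
  · refine ⟨fun f => ∏ ℓ, dd ℓ (f ℓ), ?_⟩
    ext f g
    rcases eq_or_ne f g with rfl | hfg
    · rw [Matrix.diagonal_apply_eq]
      show ∏ ℓ, d ℓ (f ℓ) (f ℓ) = ∏ ℓ, dd ℓ (f ℓ)
      exact Finset.prod_congr rfl fun ℓ _ => by rw [hdddef ℓ, Matrix.diagonal_apply_eq]
    · rw [Matrix.diagonal_apply_ne _ hfg]
      obtain ⟨ℓ, hℓ⟩ := Function.ne_iff.mp hfg
      show ∏ ℓ, d ℓ (f ℓ) (g ℓ) = 0
      exact Finset.prod_eq_zero (Finset.mem_univ ℓ)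
        (by rw [hdddef ℓ, Matrix.diagonal_apply_ne _ hℓ])
  · calc Kz * (Kbᴴ * H * Kb) * Kzᴴ = Kbᴴ * (K * H * Kᴴ) * Kb := by
          simp only [hz, Matrix.conjTranspose_mul, Matrix.conjTranspose_conjTranspose,
            mul_assoc, cb, cb']
    _ = -(Kbᴴ * H * Kb) := by
          rw [hinv]
          simp only [Matrix.mul_neg, Matrix.neg_mul]
end

section
/- Let n ≥ 1, let H be a 2^n-dimensional complex matrix, let K be a local unitary with K * H * Kᴴ = -H (so exp(-itH) is type-I locally invertible), and let K₀ be any local unitary. Then for every t : ℝ the coset propagator U := K₀ * exp(-(Complex.I * t) • H) is pointwise invertible by the pair of local unitaries K₁ := K * K₀ᴴ and K₂ := Kᴴ * K₀ᴴ, namely K₁ * U * K₂ = exp((Complex.I * t) • H) * K₀ᴴ = U⁻¹. (Elements of the cosets K₀·{exp(-itH)} of a type-I invertible one-parameter group are type-II locally invertible.) -/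
open Matrix

lemma IsLocalUnitary.conjTranspose_mul {n : ℕ}
    {K : Matrix (Fin n → Fin 2) (Fin n → Fin 2) ℂ} (hK : IsLocalUnitary K) :
    Kᴴ * K = 1 := by
  obtain ⟨u, hu, hKf⟩ := hK
  ext f g
  simp only [Matrix.mul_apply, Matrix.conjTranspose_apply, hKf, Matrix.one_apply]
  have : ∀ h : Fin n → Fin 2,
      star (∏ ℓ, u ℓ (h ℓ) (f ℓ)) * ∏ ℓ, u ℓ (h ℓ) (g ℓ)
        = ∏ ℓ, star (u ℓ (h ℓ) (f ℓ)) * u ℓ (h ℓ) (g ℓ) := by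
    intro h
    rw [star_prod, ← Finset.prod_mul_distrib]
  simp_rw [this]
  rw [← Fintype.piFinset_univ, ← Finset.prod_univ_sum (fun _ => Finset.univ)
    (fun ℓ v => star (u ℓ v (f ℓ)) * u ℓ v (g ℓ))]
  have key : ∀ ℓ : Fin n, ∑ x : Fin 2, star (u ℓ x (f ℓ)) * u ℓ x (g ℓ)
      = (1 : Matrix (Fin 2) (Fin 2) ℂ) (f ℓ) (g ℓ) := by
    intro ℓ
    rw [← hu ℓ, Matrix.mul_apply]
    simp [Matrix.conjTranspose_apply]
  simp_rw [key]
  by_cases hfg : f = g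
  · subst hfg; simp [Matrix.one_apply]
  · obtain ⟨ℓ, hℓ⟩ := Function.ne_iff.mp hfg
    rw [if_neg hfg, Finset.prod_eq_zero (Finset.mem_univ ℓ)]
    simp [Matrix.one_apply, hℓ]

theorem stmt17 (n : ℕ) (hn : 1 ≤ n)
    (H K K₀ : Matrix (Fin n → Fin 2) (Fin n → Fin 2) ℂ)
    (hK : IsLocalUnitary K) (hK₀ : IsLocalUnitary K₀)
    (hinv : K * H * Kᴴ = -H) (t : ℝ) :
    (K * K₀ᴴ) * (K₀ * NormedSpace.exp (-(Complex.I * (t : ℂ)) • H)) * (Kᴴ * K₀ᴴ) =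
        NormedSpace.exp ((Complex.I * (t : ℂ)) • H) * K₀ᴴ ∧
      NormedSpace.exp ((Complex.I * (t : ℂ)) • H) * K₀ᴴ =
        (K₀ * NormedSpace.exp (-(Complex.I * (t : ℂ)) • H))⁻¹ := by
  set c : ℂ := Complex.I * (t : ℂ)
  have hKl : Kᴴ * K = 1 := hK.conjTranspose_mul
  have hKr : K * Kᴴ = 1 := mul_eq_one_comm.mp hKl
  have hK₀l : K₀ᴴ * K₀ = 1 := hK₀.conjTranspose_mul
  have hK₀r : K₀ * K₀ᴴ = 1 := mul_eq_one_comm.mp hK₀l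
  have hKinv : K⁻¹ = Kᴴ := Matrix.inv_eq_right_inv hKr
  have hKunit : IsUnit K := ⟨⟨K, Kᴴ, hKr, hKl⟩, rfl⟩
  have hconj : K * NormedSpace.exp (-c • H) * Kᴴ = NormedSpace.exp (c • H) := by
    have h1 : K * (-c • H) * Kᴴ = c • H := by
      rw [Matrix.mul_smul, Matrix.smul_mul, hinv, smul_neg, neg_smul, neg_neg]
    calc K * NormedSpace.exp (-c • H) * Kᴴ
        = K * NormedSpace.exp (-c • H) * K⁻¹ := by rw [hKinv]
      _ = NormedSpace.exp (K * (-c • H) * K⁻¹) := (Matrix.exp_conj K _ hKunit).symm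
      _ = NormedSpace.exp (c • H) := by rw [hKinv, h1]
  have hexp : NormedSpace.exp (-c • H) * NormedSpace.exp (c • H) = 1 := by
    rw [← Matrix.exp_add_of_commute]
    · rw [neg_smul, neg_add_cancel, NormedSpace.exp_zero]
    · exact (Commute.refl H).smul_left _ |>.smul_right _
  constructor
  · calc (K * K₀ᴴ) * (K₀ * NormedSpace.exp (-c • H)) * (Kᴴ * K₀ᴴ)
        = K * (K₀ᴴ * K₀) * NormedSpace.exp (-c • H) * Kᴴ * K₀ᴴ := by
          noncomm_ring
      _ = K * NormedSpace.exp (-c • H) * Kᴴ * K₀ᴴ := by rw [hK₀l, mul_one]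
      _ = NormedSpace.exp (c • H) * K₀ᴴ := by rw [hconj]
  · refine (Matrix.inv_eq_right_inv ?_).symm
    calc (K₀ * NormedSpace.exp (-c • H)) * (NormedSpace.exp (c • H) * K₀ᴴ)
        = K₀ * (NormedSpace.exp (-c • H) * NormedSpace.exp (c • H)) * K₀ᴴ := by
          noncomm_ring
      _ = 1 := by rw [hexp, mul_one, hK₀r]
end

section
/- Let H be a Hermitian N×N complex matrix and K a unitary N×N complex matrix. Then the target function of the gradient flow satisfies the bound f(K) := Re (trace (K * H * Kᴴ * (-H))) ≤ Re (trace (H * H)), i.e. -Re (trace (K * H * Kᴴ * H)) ≤ trace(H²), and equality holds if and only if K * H * Kᴴ = -H. Hence the global maximum ‖H‖₂² of f over the unitary group is attained exactly at those K that sign-invert H by conjugation. -/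
open Matrix

lemma aux_trace_re_nonneg {N : ℕ} (M : Matrix (Fin N) (Fin N) ℂ) :
    0 ≤ (Mᴴ * M).trace.re ∧ ((Mᴴ * M).trace.re = 0 ↔ M = 0) := by
  have htr : (Mᴴ * M).trace.re = ∑ j, ∑ i, Complex.normSq (M i j) := by
    simp only [Matrix.trace, Matrix.diag, Matrix.mul_apply, Matrix.conjTranspose_apply,
      Complex.re_sum]
    refine Finset.sum_congr rfl fun j _ => ?_
    refine Finset.sum_congr rfl fun i _ => ?_
    rw [mul_comm, show star (M i j) = (starRingEnd ℂ) (M i j) from rfl, Complex.mul_conj]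
    simp
  constructor
  · rw [htr]
    exact Finset.sum_nonneg fun j _ => Finset.sum_nonneg fun i _ => Complex.normSq_nonneg _
  · rw [htr]
    constructor
    · intro h
      have h' : ∀ j ∈ Finset.univ, ∑ i, Complex.normSq (M i j) = 0 := by
        intro j _
        have := Finset.sum_eq_zero_iff_of_nonneg (fun j _ => Finset.sum_nonneg
          (fun i _ => Complex.normSq_nonneg (M i j))) |>.mp h
        exact this j (Finset.mem_univ j)
      ext i j
      have := Finset.sum_eq_zero_iff_of_nonneg
        (fun i _ => Complex.normSq_nonneg (M i j)) |>.mp (h' j (Finset.mem_univ j)) i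
        (Finset.mem_univ i)
      simpa using Complex.normSq_eq_zero.mp this
    · intro h; simp [h]

theorem stmt18 (N : ℕ) (H K : Matrix (Fin N) (Fin N) ℂ)
    (hH : Hᴴ = H) (hK : Kᴴ * K = 1) :
    ((K * H * Kᴴ * (-H)).trace.re ≤ ((H * H).trace).re) ∧
    (((K * H * Kᴴ * (-H)).trace.re = ((H * H).trace).re) ↔ K * H * Kᴴ = -H) := by
  set A := K * H * Kᴴ with hA
  have hAH : Aᴴ = A := by
    rw [hA]; simp [Matrix.conjTranspose_mul, hH, Matrix.mul_assoc]
  set M := A + H with hM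
  have hMH : Mᴴ = M := by rw [hM]; simp [hAH, hH]
  have hAA : (A * A).trace = (H * H).trace := by
    have : A * A = K * (H * H) * Kᴴ := by
      rw [hA]
      calc K * H * Kᴴ * (K * H * Kᴴ) = K * H * (Kᴴ * K) * H * Kᴴ := by
            simp only [Matrix.mul_assoc]
        _ = K * (H * H) * Kᴴ := by rw [hK]; simp only [Matrix.mul_one, Matrix.mul_assoc]
    rw [this, Matrix.trace_mul_cycle, ← Matrix.mul_assoc, hK, Matrix.one_mul]
  have hexp : (Mᴴ * M).trace.re =
      2 * (H * H).trace.re + 2 * (A * H).trace.re := by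
    rw [hMH, hM]
    have : (A + H) * (A + H) = A * A + A * H + H * A + H * H := by
      noncomm_ring
    rw [this]
    rw [Matrix.trace_add, Matrix.trace_add, Matrix.trace_add, hAA,
      Matrix.trace_mul_comm H A]
    simp [Complex.add_re]; ring
  have hkey := aux_trace_re_nonneg M
  have hneg : (A * -H).trace.re = -(A * H).trace.re := by
    simp [Matrix.trace_neg]
  constructor
  · rw [hneg] at *
    linarith [hkey.1, hexp]
  · rw [hneg]
    constructor
    · intro h
      have : (Mᴴ * M).trace.re = 0 := by linarith [hexp]
      have hM0 : M = 0 := hkey.2.mp this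
      rw [hM] at hM0
      exact eq_neg_of_add_eq_zero_left hM0
    · intro h
      rw [h, Matrix.neg_mul, Matrix.trace_neg]
      simp
end
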